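/- Let P, Q ∈ SYT(r×c), n = rc, S = stack(P,Q), and let λ(x,y) for 0 ≤ x, y ≤ n (Cartesian coordinates) denote the (n+1)×(n+1) northeast block of partitions of PEdiagram(S) (the block whose unit-square decorations form PM(S)^NE). Then for all 0 ≤ x, y ≤ n, λ(x,y) = λ(x,0) +′ λ(0,y), where +′ denotes the vertical sum of partitions. -/

import Mathlib

namespace PromRS

/-! ## Rectangular standard Young tableaux (as functions; 0-indexed cells; entries 1..R*C) -/

/-- `T` is a standard Young tableau of rectangular shape with `R` rows and `C` columns:
rows and columns strictly increase, and the entries on the `R × C` rectangle are a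
bijection onto `{1, …, R*C}`. -/
def IsSYT (R C : ℕ) (T : ℕ → ℕ → ℕ) : Prop :=
  (∀ i j, i < R → j + 1 < C → T i j < T i (j + 1)) ∧
  (∀ i j, i + 1 < R → j < C → T i j < T (i + 1) j) ∧
  Set.BijOn (fun p : ℕ × ℕ => T p.1 p.2) {p : ℕ × ℕ | p.1 < R ∧ p.2 < C} (Set.Icc 1 (R * C))

/-- Stacking: add `r*c` to every entry of `Q` and place the result below `P`. -/
def stack (r c : ℕ) (P Q : ℕ → ℕ → ℕ) : ℕ → ℕ → ℕ := fun i j =>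
  if i < r then P i j else Q (i - r) j + r * c

/-! ## Gromotion and promotion permutations -/

/-- Value of `T` at a cell, with `⊤` outside the `R × C` rectangle. -/
def ext (R C : ℕ) (T : ℕ → ℕ → ℕ) (p : ℕ × ℕ) : WithTop ℕ :=
  if p.1 < R ∧ p.2 < C then ((T p.1 p.2 : ℕ) : WithTop ℕ) else ⊤

/-- The jeu de taquin slide moves the empty cell to the smaller of its east/south neighbors. -/
def nextCell (R C : ℕ) (T : ℕ → ℕ → ℕ) (p : ℕ × ℕ) : ℕ × ℕ :=
  if ext R C T (p.1, p.2 + 1) < ext R C T (p.1 + 1, p.2) then (p.1, p.2 + 1)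
  else (p.1 + 1, p.2)

/-- The sliding path of the empty cell, starting at the top-left corner. -/
def slidePath (R C : ℕ) (T : ℕ → ℕ → ℕ) : ℕ → ℕ × ℕ
  | 0 => (0, 0)
  | k + 1 => nextCell R C T (slidePath R C T k)

def maxEntry (R C : ℕ) (T : ℕ → ℕ → ℕ) : ℕ :=
  ((Finset.range R) ×ˢ (Finset.range C)).sup fun p => T p.1 p.2

/-- Gromotion: delete the minimal entry (at the top-left corner), rectify by jeu de taquin
slides, and fill the vacated outer corner with (current maximum) + 1; entries are not
decremented. -/
def gromotion (R C : ℕ) (T : ℕ → ℕ → ℕ) : ℕ → ℕ → ℕ := fun i j =>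
  if i = R - 1 ∧ j = C - 1 then maxEntry R C T + 1
  else
    match (List.range (R + C - 2)).find? (fun k => decide (slidePath R C T k = (i, j))) with
    | some k => T (slidePath R C T (k + 1)).1 (slidePath R C T (k + 1)).2
    | none => T i j

/-- The entry that slides (up) into row `i` (1-indexed) during one gromotion slide of `T`:
the value of `T` at the first cell of the sliding path lying in 0-indexed row `i`. -/
def slideInto (R C : ℕ) (T : ℕ → ℕ → ℕ) (i : ℕ) : ℕ :=
  match (List.range (R + C - 1)).find? (fun k => decide ((slidePath R C T k).1 = i)) with
  | some k => T (slidePath R C T k).1 (slidePath R C T k).2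
  | none => 0

/-- The `i`-th promotion permutation of `T ∈ SYT(R × C)`: its value at `j` is the entry
that slides into row `i` when computing `gromotion^j(T)`, taken modulo `R*C` with
residues in `{1, …, R*C}`. -/
def promPerm (R C : ℕ) (T : ℕ → ℕ → ℕ) (i : ℕ) : ℕ → ℕ := fun j =>
  (slideInto R C ((gromotion R C)^[j - 1] T) i - 1) % (R * C) + 1

/-! ## Tableaux as lists of rows, Robinson–Schensted insertion -/

/-- Entry of a list-of-rows tableau (0-indexed; `0` outside). -/
def entryL (T : List (List ℕ)) (i j : ℕ) : ℕ := (T.getD i []).getD j 0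

/-- Convert a function tableau on an `R × C` rectangle to a list of rows. -/
def toListT (R C : ℕ) (T : ℕ → ℕ → ℕ) : List (List ℕ) :=
  (List.range R).map fun i => (List.range C).map fun j => T i j

/-- Transpose (conjugate) of a list-of-rows tableau. -/
def transposeT (T : List (List ℕ)) : List (List ℕ) :=
  (List.range (T.getD 0 []).length).map fun j => T.filterMap fun row => row[j]?

/-- Shape (row lengths) of a list-of-rows tableau. -/
def shapeL (T : List (List ℕ)) : List ℕ := T.map List.length

/-- Standard Young tableau, as a list of rows: weakly decreasing nonempty row lengths,
rows and columns strictly increasing, and entries exactly `{1, …, N}` where `N` is the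
number of cells. -/
def IsSYTList (T : List (List ℕ)) : Prop :=
  (∀ i, i + 1 < T.length → (T.getD (i + 1) []).length ≤ (T.getD i []).length) ∧
  (∀ row ∈ T, row ≠ []) ∧
  (∀ i j, i < T.length → j + 1 < (T.getD i []).length → entryL T i j < entryL T i (j + 1)) ∧
  (∀ i j, i + 1 < T.length → j < (T.getD (i + 1) []).length →
    entryL T i j < entryL T (i + 1) j) ∧
  T.flatten.Nodup ∧ (∀ m, m ∈ T.flatten ↔ 1 ≤ m ∧ m ≤ T.flatten.length)

/-- Schensted row insertion of `x` into a tableau. -/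
def rowInsert : List (List ℕ) → ℕ → List (List ℕ)
  | [], x => [[x]]
  | r :: rs, x =>
    match r.dropWhile (fun y => decide (y < x)) with
    | [] => (r ++ [x]) :: rs
    | y :: bs => (r.takeWhile (fun y => decide (y < x)) ++ x :: bs) :: rowInsert rs y

/-- The (0-indexed) row where the shape grew when passing from `P` to `P'`. -/
def rowOfNewCell (P P' : List (List ℕ)) : ℕ :=
  ((List.range P'.length).find? fun i =>
    decide ((P'.getD i []).length ≠ (P.getD i []).length)).getD 0

def placeInRow (Q : List (List ℕ)) (r k : ℕ) : List (List ℕ) :=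
  if r < Q.length then Q.set r (Q.getD r [] ++ [k]) else Q ++ [[k]]

/-- The Robinson–Schensted correspondence: the pair (insertion tableau, recording tableau)
of a word. -/
def RS (w : List ℕ) : List (List ℕ) × List (List ℕ) :=
  (List.range w.length).foldl
    (fun PQ i =>
      let P' := rowInsert PQ.1 (w.getD i 0)
      (P', placeInRow PQ.2 (rowOfNewCell PQ.1 P') (i + 1)))
    ([], [])

/-! ## Jeu de taquin on list tableaux; evacuation -/

def extL (T : List (List ℕ)) (p : ℕ × ℕ) : WithTop ℕ :=
  if p.2 < (T.getD p.1 []).length then ((entryL T p.1 p.2 : ℕ) : WithTop ℕ) else ⊤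

def nextCellL (T : List (List ℕ)) (p : ℕ × ℕ) : ℕ × ℕ :=
  if extL T (p.1, p.2 + 1) = ⊤ ∧ extL T (p.1 + 1, p.2) = ⊤ then p
  else if extL T (p.1, p.2 + 1) < extL T (p.1 + 1, p.2) then (p.1, p.2 + 1)
  else (p.1 + 1, p.2)

def jdtPath (T : List (List ℕ)) : ℕ → ℕ × ℕ
  | 0 => (0, 0)
  | k + 1 => nextCellL T (jdtPath T k)

/-- The outer corner vacated when the minimal entry of `T` is deleted and the tableau is
rectified by jeu de taquin slides. -/
def vacated (T : List (List ℕ)) : ℕ × ℕ := jdtPath T T.flatten.length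

/-- The value at cell `(i, j)` after the rectification slide. -/
def slidValue (T : List (List ℕ)) (i j : ℕ) : ℕ :=
  match (List.range T.flatten.length).find? (fun k =>
      decide (jdtPath T k = (i, j) ∧ jdtPath T (k + 1) ≠ (i, j))) with
  | some k => entryL T (jdtPath T (k + 1)).1 (jdtPath T (k + 1)).2
  | none => entryL T i j

/-- Delete the minimal entry of `T` and rectify. -/
def delta (T : List (List ℕ)) : List (List ℕ) :=
  ((List.range T.length).map fun i =>
    (List.range ((T.getD i []).length - if i = (vacated T).1 then 1 else 0)).map fun j =>
      slidValue T i j).filter fun row => decide (row ≠ [])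

/-- The entry of the evacuation `∂T` at cell `(i,j)`: `n + 1 - k` where the `k`-th
deletion-rectification vacates `(i,j)`. -/
def evacEntry (T : List (List ℕ)) (i j : ℕ) : ℕ :=
  match (List.range T.flatten.length).find? (fun k =>
      decide (vacated (delta^[k] T) = (i, j))) with
  | some k => T.flatten.length - k
  | none => 0

/-- Schützenberger evacuation `∂T` of a standard Young tableau. -/
def evacL (T : List (List ℕ)) : List (List ℕ) :=
  (List.range T.length).map fun i =>
    (List.range (T.getD i []).length).map fun j => evacEntry T i j

/-! ## Shadow lines, skeleta, and Viennot's construction -/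

def dirNE (a b : ℤ × ℤ) : Prop := a.1 ≤ b.1 ∧ a.2 ≤ b.2
def dirSE (a b : ℤ × ℤ) : Prop := a.1 ≤ b.1 ∧ b.2 ≤ a.2
def dirSW (a b : ℤ × ℤ) : Prop := b.1 ≤ a.1 ∧ b.2 ≤ a.2
def dirNW (a b : ℤ × ℤ) : Prop := b.1 ≤ a.1 ∧ a.2 ≤ b.2

def minimalsUnder (d : ℤ × ℤ → ℤ × ℤ → Prop) (P : Set (ℤ × ℤ)) : Set (ℤ × ℤ) :=
  {p ∈ P | ∀ q ∈ P, d q p → q = p}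

/-- `P` minus its first `j` shadow lines. -/
def shadowRest (d : ℤ × ℤ → ℤ × ℤ → Prop) (P : Set (ℤ × ℤ)) : ℕ → Set (ℤ × ℤ)
  | 0 => P
  | j + 1 => shadowRest d P j \ minimalsUnder d (shadowRest d P j)

/-- The `j`-th shadow line of `P` (1-indexed `j`). -/
def shadowLine (d : ℤ × ℤ → ℤ × ℤ → Prop) (P : Set (ℤ × ℤ)) (j : ℕ) : Set (ℤ × ℤ) :=
  minimalsUnder d (shadowRest d P (j - 1))

/-- The skeleton of a single shadow line `L`: the minimal elements of the set of points
covered by the shadows of at least two points of `L`. -/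
def lineSkeleton (d : ℤ × ℤ → ℤ × ℤ → Prop) (L : Set (ℤ × ℤ)) : Set (ℤ × ℤ) :=
  minimalsUnder d {x | ∃ p ∈ L, ∃ q ∈ L, p ≠ q ∧ d p x ∧ d q x}

/-- The skeleton of `P`: the union of the skeleta of its shadow lines. -/
def skeleton (d : ℤ × ℤ → ℤ × ℤ → Prop) (P : Set (ℤ × ℤ)) : Set (ℤ × ℤ) :=
  ⋃ j : ℕ, lineSkeleton d (shadowLine d P (j + 1))

/-- The `k`-th iterated skeleton of `P`. -/
def skeletonIter (d : ℤ × ℤ → ℤ × ℤ → Prop) (P : Set (ℤ × ℤ)) (k : ℕ) : Set (ℤ × ℤ) :=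
  (skeleton d)^[k] P

def IsMinSnd (L : Set (ℤ × ℤ)) (y : ℤ) : Prop := (∃ p ∈ L, p.2 = y) ∧ ∀ p ∈ L, y ≤ p.2
def IsMaxSnd (L : Set (ℤ × ℤ)) (y : ℤ) : Prop := (∃ p ∈ L, p.2 = y) ∧ ∀ p ∈ L, p.2 ≤ y
def IsMinFst (L : Set (ℤ × ℤ)) (x : ℤ) : Prop := (∃ p ∈ L, p.1 = x) ∧ ∀ p ∈ L, x ≤ p.1
def IsMaxFst (L : Set (ℤ × ℤ)) (x : ℤ) : Prop := (∃ p ∈ L, p.1 = x) ∧ ∀ p ∈ L, p.1 ≤ x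

/-- The set of exit coordinates (specified by `spec`) of the shadow lines of the `i`-th
iterated skeleton of `P` in direction `d`. -/
def exitSet (spec : Set (ℤ × ℤ) → ℤ → Prop) (d : ℤ × ℤ → ℤ × ℤ → Prop)
    (P : Set (ℤ × ℤ)) (i : ℕ) : Set ℤ :=
  {v | ∃ j : ℕ, spec (shadowLine d (skeletonIter d P i) (j + 1)) v}

/-- The word read off along one edge in Viennot's construction is the lattice word of the
standard tableau `T`: there is an enumeration `e` of all shadow-line exit coordinates,
in the order prescribed by `lt`, such that the `m`-th exit belongs to a shadow line of the
`i`-th iterated skeleton exactly when the entry `m` of `T` lies in row `i + 1`. -/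
def ReadsWord (spec : Set (ℤ × ℤ) → ℤ → Prop) (lt : ℤ → ℤ → Prop)
    (d : ℤ × ℤ → ℤ × ℤ → Prop) (P : Set (ℤ × ℤ)) (T : List (List ℕ)) : Prop :=
  ∃ e : Fin T.flatten.length → ℤ,
    (∀ a b : Fin T.flatten.length, a < b → lt (e a) (e b)) ∧
    (Set.range e = ⋃ i : ℕ, exitSet spec d P i) ∧
    ∀ (m : Fin T.flatten.length) (i : ℕ), e m ∈ exitSet spec d P i →
      (T.findIdx fun row => row.contains (m.1 + 1)) + 1 = i + 1

/-- `𝒱(𝒫, ↗) = (Pt, Qt)`: the P-word is read bottom-to-top along the right edge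
(east exit heights, which are the minimal `y`-coordinates of the lines), the Q-word
left-to-right along the top edge (north exits at minimal `x`-coordinates). -/
def ViennotNE (P : Set (ℤ × ℤ)) (Pt Qt : List (List ℕ)) : Prop :=
  ReadsWord IsMinSnd (· < ·) dirNE P Pt ∧ ReadsWord IsMinFst (· < ·) dirNE P Qt

/-- `𝒱(𝒫, ↘) = (Pt, Qt)`: P-word left-to-right along the bottom edge, Q-word
top-to-bottom along the right edge. -/
def ViennotSE (P : Set (ℤ × ℤ)) (Pt Qt : List (List ℕ)) : Prop :=
  ReadsWord IsMinFst (· < ·) dirSE P Pt ∧ ReadsWord IsMaxSnd (· > ·) dirSE P Qt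

/-- `𝒱(𝒫, ↙) = (Pt, Qt)`: P-word bottom-to-top along the left edge, Q-word
right-to-left along the bottom edge. -/
def ViennotSW (P : Set (ℤ × ℤ)) (Pt Qt : List (List ℕ)) : Prop :=
  ReadsWord IsMaxSnd (· < ·) dirSW P Pt ∧ ReadsWord IsMaxFst (· > ·) dirSW P Qt

/-- `𝒱(𝒫, ↖) = (Pt, Qt)`: P-word right-to-left along the top edge, Q-word
bottom-to-top along the left edge. -/
def ViennotNW (P : Set (ℤ × ℤ)) (Pt Qt : List (List ℕ)) : Prop :=
  ReadsWord IsMaxFst (· > ·) dirNW P Pt ∧ ReadsWord IsMinSnd (· < ·) dirNW P Qt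

/-- The point set `𝒫^NE(ρ)` of the northeast `n × n` block of the permutation matrix of
`ρ ∈ S_{2n}`, in Cartesian coordinates. -/
def pointsNE (n : ℕ) (f : ℕ → ℕ) : Set (ℤ × ℤ) :=
  {p | ∃ x : ℕ, 1 ≤ x ∧ x ≤ n ∧ n < f x ∧ p = ((f x : ℤ) - n, (n : ℤ) + 1 - x)}

/-! ## Crossings and nestings of perfect matchings -/

/-- The matching `{a, f a}` on `{1, …, N}` has a `k`-crossing:
blocks `{a₁ < b₁}, …, {a_k < b_k}` with `a₁ < ⋯ < a_k < b₁ < ⋯ < b_k`. -/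
def HasCrossing (f : ℕ → ℕ) (N k : ℕ) : Prop :=
  ∃ a b : Fin k → ℕ, StrictMono a ∧ StrictMono b ∧
    (∀ m, 1 ≤ a m ∧ b m ≤ N ∧ f (a m) = b m ∧ a m < b m) ∧
    ∀ m m' : Fin k, a m < b m'

/-- The matching `{a, f a}` on `{1, …, N}` has a `k`-nesting:
blocks `{a₁ < b₁}, …, {a_k < b_k}` with `a₁ < ⋯ < a_k < b_k < ⋯ < b₁`. -/
def HasNesting (f : ℕ → ℕ) (N k : ℕ) : Prop :=
  ∃ a b : Fin k → ℕ, StrictMono a ∧ StrictAnti b ∧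
    (∀ m, 1 ≤ a m ∧ b m ≤ N ∧ f (a m) = b m ∧ a m < b m) ∧
    ∀ m m' : Fin k, a m < b m'

/-! ## Local rules, the promotion–evacuation diagram, and the promotion matrix -/

/-- Partitions are encoded as lists of row lengths (fixed length, padded by zeros). -/
def sortDesc (l : List ℕ) : List ℕ := List.insertionSort (· ≥ ·) l

/-- The sequence `ν + κ - λ` (pointwise). -/
def ruleSeq (lam nu ka : List ℕ) : List ℕ :=
  List.zipWith (fun a b => a - b) (List.zipWith (· + ·) nu ka) lam

/-- The local rule: `μ = sort(ν + κ - λ)`. -/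
def localRule (lam nu ka : List ℕ) : List ℕ := sortDesc (ruleSeq lam nu ka)

/-- The decoration of a local rule square: `i` if `ν + κ - λ` fails to be sorted at rows
`i, i+1` (1-indexed), and `0` if no decoration is present. -/
def decoration (lam nu ka : List ℕ) : ℕ :=
  match (List.range (ruleSeq lam nu ka).length).find? (fun i =>
      decide ((ruleSeq lam nu ka).getD i 0 < (ruleSeq lam nu ka).getD (i + 1) 0)) with
  | some i => i + 1
  | none => 0

/-- Fill in the next row of the promotion–evacuation diagram from the previous row `prev`:
the new row starts with the empty partition at position `s` and continues by local rules. -/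
def nextRow (R : ℕ) (prev : ℕ → List ℕ) (s : ℕ) : ℕ → List ℕ
  | 0 => List.replicate R 0
  | x + 1 =>
    if x + 1 ≤ s then List.replicate R 0
    else localRule (prev x) (prev (x + 1)) (nextRow R prev s x)

/-- The `j`-th row of the promotion–evacuation diagram of `T ∈ SYT(R × C)`, as a function
of the column index (row `0` is the chain of `T`). -/
def PErow (R C : ℕ) (T : ℕ → ℕ → ℕ) : ℕ → ℕ → List ℕ
  | 0 => fun x => (List.range R).map fun i =>
      ((Finset.range C).filter fun j => T i j ≤ min x (R * C)).card
  | j + 1 => nextRow R (PErow R C T j) (j + 1)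

/-- For `S = stack(P, Q) ∈ SYT(2r × c)` and `n = r*c`, the `(n+1) × (n+1)` northeast block
of partitions `λ(x, y)` of `PEdiagram(S)` (Cartesian coordinates): `λ(x,y)` is the
diagram entry in row `n - y`, column `n + x`. -/
def lamBlock (r c : ℕ) (S : ℕ → ℕ → ℕ) (x y : ℕ) : List ℕ :=
  PErow (2 * r) c S (r * c - y) (r * c + x)

/-- The entry of `PM(S)^NE` at Cartesian coordinates `(x, y)`, `1 ≤ x, y ≤ n`: the
decoration of the local rule square with corners `λ(x-1, y-1)`, `λ(x-1, y)`, `λ(x, y-1)`,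
`λ(x, y)`. -/
def PMNE (r c : ℕ) (S : ℕ → ℕ → ℕ) (x y : ℕ) : ℕ :=
  decoration (lamBlock r c S (x - 1) y) (lamBlock r c S x y) (lamBlock r c S (x - 1) (y - 1))

/-- Chain of partitions of a list tableau: shape of the entries `≤ m`. -/
def chainOfL (T : List (List ℕ)) (m : ℕ) : List ℕ :=
  T.map fun row => (row.filter fun a => decide (a ≤ m)).length

/-- Column height `#{i : j < l i}` of a partition. -/
def colHeight (l : List ℕ) (j : ℕ) : ℕ := (l.filter fun a => decide (j < a)).length

/-- Vertical sum `l +' m` of two partitions (stack the columns of `m` onto those of `l`),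
computed inside a `rows × cols` bounding box. -/
def vsum (rows cols : ℕ) (l m : List ℕ) : List ℕ :=
  (List.range rows).map fun i =>
    ((List.range cols).filter fun j => decide (i < colHeight l j + colHeight m j)).length

/-! ## The point sets `S_k` and `S_{kj}` -/

/-- `x_{sj}`: the entry of `Q` in row `s`, column `j` (1-indexed). -/
def xEnt (Q : ℕ → ℕ → ℕ) (s j : ℕ) : ℤ := (Q (s - 1) (j - 1) : ℤ)

/-- `y_{tj}`: the entry of `∂(P)` in row `t`, column `j` (1-indexed). -/
def yEnt (r c : ℕ) (P : ℕ → ℕ → ℕ) (t j : ℕ) : ℤ :=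
  (entryL (evacL (toListT r c P)) (t - 1) (j - 1) : ℤ)

def Skj (r c : ℕ) (P Q : ℕ → ℕ → ℕ) (k j : ℕ) : Set (ℤ × ℤ) :=
  {p | ∃ s t : ℕ, 1 ≤ s ∧ s ≤ r ∧ 1 ≤ t ∧ t ≤ r ∧ s + t - 1 = k ∧
    p = (xEnt Q s j, yEnt r c P t j)}

def Sk (r c : ℕ) (P Q : ℕ → ℕ → ℕ) (k : ℕ) : Set (ℤ × ℤ) :=
  ⋃ j ∈ Set.Icc 1 c, Skj r c P Q k j

/-- A southeast chain of `k` ones in the matrix `U` (rows increase, columns increase),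
contained in a rectangle that fully fits into the strictly upper triangular part of the
`N × N` matrix. -/
def HasSEChain (U : ℕ → ℕ → ℕ) (N k : ℕ) : Prop :=
  ∃ a b : Fin k → ℕ, StrictMono a ∧ StrictMono b ∧ (∀ m, U (a m) (b m) = 1) ∧
    ∃ r₁ r₂ c₁ c₂ : ℕ, 1 ≤ r₁ ∧ r₂ < c₁ ∧ c₂ ≤ N ∧
      ∀ m, r₁ ≤ a m ∧ a m ≤ r₂ ∧ c₁ ≤ b m ∧ b m ≤ c₂

/-- A southwest chain of `k` ones in the matrix `U` (rows increase, columns decrease),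
contained in a rectangle that fully fits into the strictly upper triangular part of the
`N × N` matrix. -/
def HasSWChain (U : ℕ → ℕ → ℕ) (N k : ℕ) : Prop :=
  ∃ a b : Fin k → ℕ, StrictMono a ∧ StrictAnti b ∧ (∀ m, U (a m) (b m) = 1) ∧
    ∃ r₁ r₂ c₁ c₂ : ℕ, 1 ≤ r₁ ∧ r₂ < c₁ ∧ c₂ ≤ N ∧
      ∀ m, r₁ ≤ a m ∧ a m ≤ r₂ ∧ c₁ ≤ b m ∧ b m ≤ c₂

-- AUXSTART

/-! ### Auxiliary parade -/

/-- A partition in an `R × c` box, encoded as a length-`R` list of row lengths. -/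
def Part (R c : ℕ) (l : List ℕ) : Prop :=
  l.length = R ∧ l.Pairwise (· ≥ ·) ∧ ∀ a ∈ l, a ≤ c

/-- `m` is obtained from `l` by adding one box (incrementing one entry). -/
def OneBox (l m : List ℕ) : Prop :=
  ∃ i, i < l.length ∧ m = l.set i (l.getD i 0 + 1)

/-- Number of `j < c` with `i < H j`. -/
def ent (c : ℕ) (H : ℕ → ℕ) (i : ℕ) : ℕ :=
  ((List.range c).filter fun j => decide (i < H j)).length

lemma ent_eq_card (c : ℕ) (H : ℕ → ℕ) (i : ℕ)
    : ent c H i = ((Finset.range c).filter fun j => i < H j).card := rfl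

lemma vsum_eq_map (R c : ℕ) (l m : List ℕ) :
    vsum R c l m = (List.range R).map (ent c fun j => colHeight l j + colHeight m j) := rfl

lemma countP_set (p : ℕ → Bool) (l : List ℕ) (t : ℕ) (ht : t < l.length) (v : ℕ) :
    (l.set t v).countP p + (if p (l.getD t 0) then 1 else 0)
      = l.countP p + (if p v then 1 else 0) := by
  rw [List.set_eq_take_append_cons_drop, if_pos ht]
  conv_rhs => rw [← List.take_append_drop t l, List.drop_eq_getElem_cons ht]
  rw [List.countP_append, List.countP_append, List.countP_cons, List.countP_cons,
    List.getD_eq_getElem _ _ ht]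
  cases hv : p v <;> cases hl : p l[t] <;> simp [hv, hl] <;> omega

lemma ent_congr {c : ℕ} {H H' : ℕ → ℕ} (h : ∀ j, j < c → H j = H' j) (i : ℕ) :
    ent c H i = ent c H' i := by
  unfold ent; congr 1
  apply List.filter_congr; intro j hj
  simp [h j (List.mem_range.mp hj)]

lemma ent_anti {c : ℕ} (H : ℕ → ℕ) {i i' : ℕ} (h : i ≤ i') : ent c H i' ≤ ent c H i := by
  unfold ent
  rw [← List.countP_eq_length_filter, ← List.countP_eq_length_filter]
  exact List.countP_mono_left fun j _ hj => by
    simp only [decide_eq_true_eq] at hj ⊢; omega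

lemma ent_le (c : ℕ) (H : ℕ → ℕ) (i : ℕ) : ent c H i ≤ c := by
  unfold ent
  calc ((List.range c).filter _).length ≤ (List.range c).length := List.length_filter_le _ _
  _ = c := List.length_range

lemma ent_set_ne {c : ℕ} {H H' : ℕ → ℕ} {j₀ : ℕ}
    (hH' : ∀ j, H' j = if j = j₀ then H j + 1 else H j) {i : ℕ} (hi : i ≠ H j₀) :
    ent c H' i = ent c H i := by
  unfold ent; congr 1
  apply List.filter_congr; intro j hj
  rcases eq_or_ne j j₀ with rfl | h
  · rw [hH' j, if_pos rfl]
    simp only [decide_eq_decide]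
    omega
  · simp [hH' j, h]

lemma ent_set_eq {c : ℕ} {H H' : ℕ → ℕ} {j₀ : ℕ} (hj₀ : j₀ < c)
    (hH' : ∀ j, H' j = if j = j₀ then H j + 1 else H j) :
    ent c H' (H j₀) = ent c H (H j₀) + 1 := by
  rw [ent_eq_card, ent_eq_card]
  have key : ((Finset.range c).filter fun j => H j₀ < H' j)
      = insert j₀ ((Finset.range c).filter fun j => H j₀ < H j) := by
    ext j
    simp only [Finset.mem_filter, Finset.mem_insert, Finset.mem_range, hH' j]
    rcases eq_or_ne j j₀ with rfl | h
    · simp [hj₀]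
    · simp only [if_neg h]
      tauto
  rw [key, Finset.card_insert_of_notMem (by simp)]

lemma map_ent_set {R c : ℕ} {H H' : ℕ → ℕ} {j₀ : ℕ} (hj₀ : j₀ < c) (hR : H j₀ < R)
    (hH' : ∀ j, H' j = if j = j₀ then H j + 1 else H j) :
    (List.range R).map (ent c H')
      = ((List.range R).map (ent c H)).set (H j₀) (ent c H (H j₀) + 1) := by
  apply List.ext_getElem (by simp)
  intro i h1 h2
  rw [List.getElem_set]
  simp only [List.getElem_map, List.getElem_range]
  rcases eq_or_ne (H j₀) i with rfl | h
  · rw [if_pos rfl, ent_set_eq hj₀ hH']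
  · rw [if_neg h, ent_set_ne hH' (Ne.symm h)]

-- AUX2

lemma colHeight_eq_countP (l : List ℕ) (j : ℕ) :
    colHeight l j = l.countP fun a => decide (j < a) :=
  List.countP_eq_length_filter.symm

lemma colHeight_anti (l : List ℕ) {j j' : ℕ} (h : j ≤ j') : colHeight l j' ≤ colHeight l j := by
  rw [colHeight_eq_countP, colHeight_eq_countP]
  exact List.countP_mono_left fun a _ ha => by
    simp only [decide_eq_true_eq] at ha ⊢; omega

lemma colHeight_set (l : List ℕ) {t : ℕ} (ht : t < l.length) (j : ℕ) :
    colHeight (l.set t (l.getD t 0 + 1)) j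
      = if j = l.getD t 0 then colHeight l j + 1 else colHeight l j := by
  rw [colHeight_eq_countP, colHeight_eq_countP]
  have key := countP_set (fun a => decide (j < a)) l t ht (l.getD t 0 + 1)
  rcases eq_or_ne j (l.getD t 0) with rfl | h
  · simp only [decide_eq_true_eq] at key
    rw [if_pos rfl]
    rw [if_neg (by omega), if_pos (by omega)] at key
    omega
  · simp only [decide_eq_true_eq] at key
    rw [if_neg h]
    rcases lt_or_ge j (l.getD t 0) with hlt | hge
    · rw [if_pos hlt, if_pos (by omega)] at key; omega
    · rw [if_neg (by omega), if_neg (by omega)] at key; omega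

lemma colHeight_le_of_fits {l : List ℕ} {r : ℕ} (h : ∀ i, r ≤ i → l.getD i 0 = 0) (j : ℕ) :
    colHeight l j ≤ r := by
  rw [colHeight_eq_countP]
  conv_lhs => rw [← List.take_append_drop r l]
  rw [List.countP_append]
  have h2 : (l.drop r).countP (fun a => decide (j < a)) = 0 := by
    rw [List.countP_eq_zero]
    intro a ha
    obtain ⟨k, hk, rfl⟩ := List.mem_iff_getElem.mp ha
    have hlen : r + k < l.length := by
      rw [List.length_drop] at hk; omega
    rw [List.getElem_drop]
    have h0 := h (r + k) (by omega)
    rw [List.getD_eq_getElem _ _ hlen] at h0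
    simp [h0]
  have h1 : (l.take r).countP (fun a => decide (j < a)) ≤ r := by
    calc _ ≤ (l.take r).length := List.countP_le_length
    _ ≤ r := by simp
  omega

lemma countP_lt_iff_of_sorted {l : List ℕ} (hs : l.Pairwise (· ≥ ·)) (i j : ℕ) :
    i < l.countP (fun a => decide (j < a)) ↔ j < l.getD i 0 := by
  have hpair := List.pairwise_iff_getElem.mp hs
  constructor
  · intro h
    by_contra hc
    push_neg at hc
    have hle : l.countP (fun a => decide (j < a)) ≤ i := by
      conv_lhs => rw [← List.take_append_drop i l]
      rw [List.countP_append]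
      have hd : (l.drop i).countP (fun a => decide (j < a)) = 0 := by
        rw [List.countP_eq_zero]
        intro a ha
        obtain ⟨k, hk, rfl⟩ := List.mem_iff_getElem.mp ha
        have hlen : i + k < l.length := by
          rw [List.length_drop] at hk; omega
        rw [List.getElem_drop]
        have hil : i < l.length := by omega
        have hle2 : l[i + k] ≤ l[i] := by
          rcases Nat.eq_or_lt_of_le (Nat.le_add_right i k) with heq | hlt
          · simp [← heq]
          · exact hpair i (i + k) hil hlen hlt
        rw [List.getD_eq_getElem _ _ hil] at hc
        simp only [decide_eq_true_eq]
        omega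
      have ht : (l.take i).countP (fun a => decide (j < a)) ≤ i := by
        calc _ ≤ (l.take i).length := List.countP_le_length
        _ ≤ i := by simp
      omega
    omega
  · intro h
    have hi : i < l.length := by
      by_contra hc
      push_neg at hc
      rw [List.getD_eq_default _ _ hc] at h
      omega
    conv_rhs => rw [← List.take_append_drop (i + 1) l]
    rw [List.countP_append]
    have ht : (l.take (i + 1)).countP (fun a => decide (j < a)) = i + 1 := by
      have hlen : (l.take (i + 1)).length = i + 1 := by
        simp; omega
      have hcl : (l.take (i + 1)).countP (fun a => decide (j < a)) = (l.take (i+1)).length := by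
        rw [List.countP_eq_length]
        intro a ha
        obtain ⟨k, hk, rfl⟩ := List.mem_iff_getElem.mp ha
        rw [hlen] at hk
        rw [List.getElem_take]
        have : l[i] ≤ l[k] := by
          rcases Nat.eq_or_lt_of_le (Nat.le_of_lt_succ hk) with heq | hlt
          · simp [heq]
          · exact hpair k i (by omega) hi hlt
        rw [List.getD_eq_getElem _ _ hi] at h
        simp only [decide_eq_true_eq]
        omega
      omega
    omega

lemma ent_colHeight_of_sorted {c : ℕ} {l : List ℕ} (hs : l.Pairwise (· ≥ ·))
    (hc : ∀ a ∈ l, a ≤ c) (i : ℕ) : ent c (colHeight l) i = l.getD i 0 := by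
  rw [ent_eq_card]
  have hgd : l.getD i 0 ≤ c := by
    rcases lt_or_ge i l.length with h | h
    · rw [List.getD_eq_getElem _ _ h]
      exact hc _ (List.getElem_mem _)
    · rw [List.getD_eq_default _ _ h]; omega
  have key : ((Finset.range c).filter fun j => i < colHeight l j)
      = Finset.range (l.getD i 0) := by
    ext j
    simp only [Finset.mem_filter, Finset.mem_range, colHeight_eq_countP]
    constructor
    · rintro ⟨_, h2⟩
      exact (countP_lt_iff_of_sorted hs i j).1 h2
    · intro hj
      exact ⟨by omega, (countP_lt_iff_of_sorted hs i j).2 hj⟩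
  rw [key, Finset.card_range]

lemma sorted_map_ent (R c : ℕ) (H : ℕ → ℕ) :
    ((List.range R).map (ent c H)).Pairwise (· ≥ ·) := by
  rw [List.pairwise_iff_getElem]
  intro i j hi hj hij
  simp only [List.getElem_map, List.getElem_range]
  exact ent_anti H (le_of_lt hij)

lemma part_vsum (R c : ℕ) (l m : List ℕ) : Part R c (vsum R c l m) := by
  rw [vsum_eq_map]
  refine ⟨by simp, sorted_map_ent R c _, ?_⟩
  intro a ha
  obtain ⟨i, _, rfl⟩ := List.mem_map.mp ha
  exact ent_le c _ i

-- AUX3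

lemma getD_set_self {l : List ℕ} {i : ℕ} (h : i < l.length) (v : ℕ) :
    (l.set i v).getD i 0 = v := by
  rw [List.getD_eq_getElem _ _ (by simpa using h), List.getElem_set, if_pos rfl]

lemma getD_set_ne {l : List ℕ} {i i' : ℕ} (h : i' < l.length) (hne : i ≠ i') (v : ℕ) :
    (l.set i v).getD i' 0 = l.getD i' 0 := by
  rw [List.getD_eq_getElem _ _ (by simpa using h), List.getElem_set, if_neg hne,
    List.getD_eq_getElem _ _ h]

lemma length_ruleSeq {lam nu ka : List ℕ} (hn : nu.length = lam.length)
    (hk : ka.length = lam.length) : (ruleSeq lam nu ka).length = lam.length := by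
  simp [ruleSeq, hn, hk]

lemma getElem_ruleSeq {lam nu ka : List ℕ} (hn : nu.length = lam.length)
    (hk : ka.length = lam.length) {i : ℕ} (h : i < lam.length) :
    (ruleSeq lam nu ka)[i]'(by rw [length_ruleSeq hn hk]; exact h)
      = (nu[i]'(by omega) + ka[i]'(by omega)) - lam[i]'h := by
  simp [ruleSeq, List.getElem_zipWith]

lemma ruleSeq_eq_self {lam nu ka : List ℕ} {i₀ : ℕ} (h0 : i₀ < ka.length)
    (hlam : lam = ka.set i₀ (ka.getD i₀ 0 + 1))
    (hnu : nu = lam.set i₀ (lam.getD i₀ 0 + 1)) :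
    ruleSeq lam nu ka = lam := by
  have hkl : ka.length = lam.length := by rw [hlam]; simp
  have hnl : nu.length = lam.length := by rw [hnu]; simp
  have e1 : lam.getD i₀ 0 = ka.getD i₀ 0 + 1 := by rw [hlam, getD_set_self h0]
  apply List.ext_getElem (by rw [length_ruleSeq hnl hkl])
  intro i hx1 hx2
  have hik : i < ka.length := by omega
  rw [getElem_ruleSeq hnl hkl hx2]
  have e2 : nu[i]'(by omega) = if i₀ = i then lam.getD i₀ 0 + 1 else lam[i]'hx2 := by
    rw [List.getElem_of_eq hnu (by omega), List.getElem_set]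
  have e3 : lam[i]'hx2 = if i₀ = i then ka.getD i₀ 0 + 1 else ka[i]'hik := by
    rw [List.getElem_of_eq hlam hx2, List.getElem_set]
  rw [e2, e3]
  rcases eq_or_ne i₀ i with rfl | h
  · have hgk : ka.getD i₀ 0 = ka[i₀]'h0 := List.getD_eq_getElem _ _ h0
    rw [if_pos rfl, if_pos rfl, e1]
    omega
  · rw [if_neg h, if_neg h]
    omega

lemma ruleSeq_eq_of_ne {lam nu ka : List ℕ} {i₁ i₂ : ℕ}
    (h1 : i₁ < ka.length) (h2 : i₂ < ka.length) (hne : i₁ ≠ i₂)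
    (hlam : lam = ka.set i₂ (ka.getD i₂ 0 + 1))
    (hnu : nu = lam.set i₁ (lam.getD i₁ 0 + 1)) :
    ruleSeq lam nu ka = ka.set i₁ (ka.getD i₁ 0 + 1) := by
  have hkl : ka.length = lam.length := by rw [hlam]; simp
  have hnl : nu.length = lam.length := by rw [hnu]; simp
  have e1 : lam.getD i₁ 0 = ka.getD i₁ 0 := by
    rw [hlam, getD_set_ne h1 (Ne.symm hne)]
  have e5 : lam.getD i₂ 0 = ka.getD i₂ 0 + 1 := by rw [hlam, getD_set_self h2]
  apply List.ext_getElem (by rw [length_ruleSeq hnl hkl]; simp; omega)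
  intro i hx1 hx2
  have hik : i < ka.length := by simpa using hx2
  have hil : i < lam.length := by omega
  rw [getElem_ruleSeq hnl hkl hil]
  have e2 : nu[i]'(by omega) = if i₁ = i then lam.getD i₁ 0 + 1 else lam[i]'hil := by
    rw [List.getElem_of_eq hnu (by omega), List.getElem_set]
  have e3 : lam[i]'hil = if i₂ = i then ka.getD i₂ 0 + 1 else ka[i]'hik := by
    rw [List.getElem_of_eq hlam hil, List.getElem_set]
  have e6 : (ka.set i₁ (ka.getD i₁ 0 + 1))[i]'hx2
      = if i₁ = i then ka.getD i₁ 0 + 1 else ka[i]'hik := List.getElem_set _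
  rw [e2, e3, e6]
  have hgk1 : ka.getD i₁ 0 = ka[i₁]'h1 := List.getD_eq_getElem _ _ h1
  have hgk2 : ka.getD i₂ 0 = ka[i₂]'h2 := List.getD_eq_getElem _ _ h2
  rcases eq_or_ne i₁ i with rfl | ha
  · rw [if_pos rfl, if_pos rfl, if_neg (fun hh => hne hh.symm), e1]
    omega
  · rw [if_neg ha, if_neg ha]
    rcases eq_or_ne i₂ i with rfl | hb
    · rw [if_pos rfl]
      omega
    · rw [if_neg hb]
      omega

lemma set_swap_perm {l : List ℕ} {i : ℕ} (h : i + 1 < l.length)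
    (heq : l[i]'(by omega) = l[i+1]'h) (w : ℕ) :
    List.Perm (l.set i w) (l.set (i+1) w) := by
  have hi : i < l.length := by omega
  rw [List.set_eq_take_append_cons_drop, if_pos hi,
      List.set_eq_take_append_cons_drop, if_pos h]
  rw [List.drop_eq_getElem_cons h]
  have htake : l.take (i+1) = l.take i ++ [l[i]'hi] := by
    rw [← List.take_concat_get hi, List.concat_eq_append]
  rw [htake, heq]
  simp only [List.append_assoc, List.cons_append, List.nil_append]
  exact List.Perm.append_left _ (List.Perm.swap _ _ _)

lemma sortDesc_sorted (l : List ℕ) : (sortDesc l).Pairwise (· ≥ ·) :=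
  List.pairwise_insertionSort _ l

lemma sortDesc_perm (l : List ℕ) : List.Perm (sortDesc l) l := List.perm_insertionSort _ l

lemma sortDesc_of_sorted {l : List ℕ} (h : l.Pairwise (· ≥ ·)) : sortDesc l = l :=
  List.Pairwise.insertionSort_eq h

lemma sortDesc_eq_of_perm {l m : List ℕ} (hp : List.Perm l m) (hm : m.Pairwise (· ≥ ·)) :
    sortDesc l = m :=
  List.Perm.eq_of_pairwise' (sortDesc_sorted l) hm ((sortDesc_perm l).trans hp)

-- AUX4

lemma set_swap_perm' {l : List ℕ} {i j : ℕ} (h : j < l.length) (hij : j = i + 1)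
    (heq : l[i]'(by omega) = l[j]'h) (w : ℕ) : List.Perm (l.set i w) (l.set j w) := by
  subst hij
  exact set_swap_perm h heq w

lemma core {R c : ℕ} {lam nu ka : List ℕ}
    (hka : Part R c ka) (hlam : Part R c lam) (hnu : Part R c nu)
    (h1 : OneBox lam nu) (h2 : OneBox ka lam) :
    Part R c (localRule lam nu ka) ∧ OneBox ka (localRule lam nu ka)
      ∧ OneBox (localRule lam nu ka) nu := by
  obtain ⟨i₁, hi₁, hnu_eq⟩ := h1
  obtain ⟨i₂, hi₂, hlam_eq⟩ := h2
  have hkal : ka.length = R := hka.1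
  have hlaml : lam.length = R := hlam.1
  have hnul : nu.length = R := hnu.1
  have hi₁k : i₁ < ka.length := by omega
  rcases eq_or_ne i₁ i₂ with rfl | hne
  · have hr : ruleSeq lam nu ka = lam := ruleSeq_eq_self hi₂ hlam_eq hnu_eq
    have hloc : localRule lam nu ka = lam := by
      rw [localRule, hr, sortDesc_of_sorted hlam.2.1]
    rw [hloc]
    exact ⟨hlam, ⟨i₁, hi₂, hlam_eq⟩, ⟨i₁, hi₁, hnu_eq⟩⟩
  · have hr : ruleSeq lam nu ka = ka.set i₁ (ka.getD i₁ 0 + 1) :=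
      ruleSeq_eq_of_ne hi₁k hi₂ hne hlam_eq hnu_eq
    have kgd1 : ka.getD i₁ 0 = ka[i₁]'hi₁k := List.getD_eq_getElem _ _ hi₁k
    have kgd2 : ka.getD i₂ 0 = ka[i₂]'hi₂ := List.getD_eq_getElem _ _ hi₂
    have lamgd1 : lam.getD i₁ 0 = ka.getD i₁ 0 := by
      rw [hlam_eq, getD_set_ne hi₁k (Ne.symm hne)]
    have lamget : ∀ (i : ℕ) (h : i < ka.length),
        lam[i]'(by omega) = if i₂ = i then ka.getD i₂ 0 + 1 else ka[i]'h := by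
      intro i h
      rw [List.getElem_of_eq hlam_eq (by omega), List.getElem_set]
    have nuget : ∀ (i : ℕ) (h : i < ka.length),
        nu[i]'(by omega) = if i₁ = i then lam.getD i₁ 0 + 1 else lam[i]'(by omega) := by
      intro i h
      rw [List.getElem_of_eq hnu_eq (by omega), List.getElem_set]
    have kapair := List.pairwise_iff_getElem.mp hka.2.1
    have nupair := List.pairwise_iff_getElem.mp hnu.2.1
    by_cases hsw : i₂ + 1 = i₁ ∧ ka[i₂]'hi₂ = ka[i₁]'hi₁k
    · obtain ⟨hsw1, hsw2⟩ := hsw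
      have hgdeq : ka.getD i₁ 0 = ka.getD i₂ 0 := by rw [kgd1, kgd2, ← hsw2]
      have hperm : List.Perm (ka.set i₁ (ka.getD i₁ 0 + 1)) lam := by
        rw [hgdeq, hlam_eq]
        exact (set_swap_perm' hi₁k hsw1.symm hsw2 _).symm
      have hloc : localRule lam nu ka = lam := by
        rw [localRule, hr]
        exact sortDesc_eq_of_perm hperm hlam.2.1
      rw [hloc]
      exact ⟨hlam, ⟨i₂, hi₂, hlam_eq⟩, ⟨i₁, hi₁, hnu_eq⟩⟩
    · have hglen : (ka.set i₁ (ka.getD i₁ 0 + 1)).length = R := by simp [hkal]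
      have gget : ∀ (i : ℕ) (h : i < ka.length),
          (ka.set i₁ (ka.getD i₁ 0 + 1))[i]'(by simpa using h)
            = if i₁ = i then ka.getD i₁ 0 + 1 else ka[i]'h := by
        intro i h
        rw [List.getElem_set]
      have hkey : ∀ (i : ℕ) (hi : i < i₁), ka[i]'(lt_trans hi hi₁k) ≥ ka[i₁]'hi₁k + 1 := by
        intro i hi
        have h0 : i₁ - 1 < ka.length := by omega
        have hstep : ka[i₁-1]'h0 ≥ ka[i₁]'hi₁k + 1 := by
          rcases eq_or_ne i₂ (i₁ - 1) with he | hne2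
          · have h12 : i₂ + 1 = i₁ := by omega
            have hvne : ka[i₂]'hi₂ ≠ ka[i₁]'hi₁k := fun hvv => hsw ⟨h12, hvv⟩
            have hge : ka[i₂]'hi₂ ≥ ka[i₁]'hi₁k := kapair i₂ i₁ hi₂ hi₁k (by omega)
            have hee : ka[i₁-1]'h0 = ka[i₂]'hi₂ := by
              simp only [show i₁ - 1 = i₂ by omega]
            omega
          · have hnus : nu[i₁-1]'(by omega) ≥ nu[i₁]'(by omega) :=
              nupair (i₁-1) i₁ (by omega) (by omega) (by omega)
            rw [nuget (i₁-1) h0, nuget i₁ hi₁k, if_neg (by omega : i₁ ≠ i₁ - 1),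
              if_pos rfl] at hnus
            rw [lamget (i₁-1) h0, if_neg (fun hh => hne2 hh)] at hnus
            omega
        have hrest : ka[i]'(lt_trans hi hi₁k) ≥ ka[i₁-1]'h0 := by
          rcases eq_or_ne i (i₁ - 1) with rfl | hii
          · omega
          · exact kapair i (i₁-1) (by omega) h0 (by omega)
        omega
      have hgsorted : (ka.set i₁ (ka.getD i₁ 0 + 1)).Pairwise (· ≥ ·) := by
        rw [List.pairwise_iff_getElem]
        intro i j hi hj hij
        have hik : i < ka.length := by simpa using hi
        have hjk : j < ka.length := by simpa using hj
        rw [gget i hik, gget j hjk]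
        rcases eq_or_ne i₁ j with rfl | hj1
        · rw [if_neg (by omega : i₁ ≠ i), if_pos rfl]
          have := hkey i hij
          omega
        · rw [if_neg hj1]
          rcases eq_or_ne i₁ i with rfl | hi1
          · rw [if_pos rfl]
            have := kapair i₁ j hik hjk hij
            omega
          · rw [if_neg hi1]
            exact kapair i j hik hjk hij
      have hloc : localRule lam nu ka = ka.set i₁ (ka.getD i₁ 0 + 1) := by
        rw [localRule, hr, sortDesc_of_sorted hgsorted]
      rw [hloc]
      refine ⟨⟨hglen, hgsorted, ?_⟩, ⟨i₁, hi₁k, rfl⟩, ⟨i₂, by omega, ?_⟩⟩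
      · intro a ha
        obtain ⟨i, hi, rfl⟩ := List.mem_iff_getElem.mp ha
        have hik : i < ka.length := by simpa using hi
        rw [gget i hik]
        rcases eq_or_ne i₁ i with rfl | hi1
        · rw [if_pos rfl]
          have e1 : nu[i₁]'(by omega) = lam.getD i₁ 0 + 1 := by
            rw [nuget i₁ hi₁k, if_pos rfl]
          have e2 : nu[i₁]'(by omega) ≤ c := hnu.2.2 _ (List.getElem_mem _)
          omega
        · rw [if_neg hi1]
          exact hka.2.2 _ (List.getElem_mem _)
      · have hgD2 : (ka.set i₁ (ka.getD i₁ 0 + 1)).getD i₂ 0 = ka.getD i₂ 0 := by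
          rw [getD_set_ne hi₂ hne]
        rw [hgD2]
        apply List.ext_getElem (by simp [hnul, hkal])
        intro i hx1 hx2
        have hik : i < ka.length := by omega
        rw [nuget i hik, List.getElem_set, gget i hik]
        rcases eq_or_ne i₂ i with rfl | hb
        · rw [if_pos rfl, if_neg hne, lamget i₂ hi₂, if_pos rfl]
        · rw [if_neg hb]
          rcases eq_or_ne i₁ i with rfl | ha
          · rw [if_pos rfl, if_pos rfl, lamgd1]
          · rw [if_neg ha, if_neg ha, lamget i hik, if_neg hb]
-- AUX5

lemma getD_map_ent {R c i : ℕ} {H : ℕ → ℕ} (h : i < R) :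
    ((List.range R).map (ent c H)).getD i 0 = ent c H i := by
  rw [List.getD_eq_getElem _ _ (by simpa using h)]
  simp

lemma ent_level {c i : ℕ} {H : ℕ → ℕ} (h : ∀ j, j < c → H j ≠ i + 1) :
    ent c H (i + 1) = ent c H i := by
  unfold ent; congr 1
  apply List.filter_congr
  intro j hj
  have := h j (List.mem_range.mp hj)
  simp only [decide_eq_decide]
  omega

lemma vsum_localRule {R c : ℕ} {q q' a a' : List ℕ}
    (hq : OneBox q q') (ha : OneBox a a')
    (hq'c : ∀ v ∈ q', v ≤ c) (ha'c : ∀ v ∈ a', v ≤ c)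
    (hbound : ∀ j, colHeight q' j + colHeight a' j ≤ R) :
    localRule (vsum R c q a') (vsum R c q' a') (vsum R c q a) = vsum R c q' a := by
  obtain ⟨t₁, ht₁, hq'e⟩ := hq
  obtain ⟨t₂, ht₂, ha'e⟩ := ha
  set j₁ := q.getD t₁ 0 with hj₁
  set j₂ := a.getD t₂ 0 with hj₂
  have hj₁c : j₁ < c := by
    have h1 : q'.getD t₁ 0 = j₁ + 1 := by rw [hq'e, getD_set_self ht₁]
    have h2 : q'.getD t₁ 0 ≤ c := by
      rw [List.getD_eq_getElem _ _ (by rw [hq'e]; simpa using ht₁)]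
      exact hq'c _ (List.getElem_mem _)
    omega
  have hj₂c : j₂ < c := by
    have h1 : a'.getD t₂ 0 = j₂ + 1 := by rw [ha'e, getD_set_self ht₂]
    have h2 : a'.getD t₂ 0 ≤ c := by
      rw [List.getD_eq_getElem _ _ (by rw [ha'e]; simpa using ht₂)]
      exact ha'c _ (List.getElem_mem _)
    omega
  have hcq' : ∀ j, colHeight q' j = if j = j₁ then colHeight q j + 1 else colHeight q j := by
    intro j; rw [hq'e, colHeight_set q ht₁ j]
  have hca' : ∀ j, colHeight a' j = if j = j₂ then colHeight a j + 1 else colHeight a j := by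
    intro j; rw [ha'e, colHeight_set a ht₂ j]
  set H : ℕ → ℕ := fun j => colHeight q j + colHeight a' j with hH
  set H₂ : ℕ → ℕ := fun j => colHeight q j + colHeight a j with hH₂
  set i₁ := H j₁ with hi₁
  set i₂ := H₂ j₂ with hi₂def
  have hi1e : i₁ = colHeight q j₁ + colHeight a' j₁ := hi₁
  have hi2e : i₂ = colHeight q j₂ + colHeight a j₂ := hi₂def
  have hH2j : ∀ j, H j = if j = j₂ then H₂ j + 1 else H₂ j := by
    intro j
    simp only [hH, hH₂, hca' j]
    split <;> omega
  have hi₁R : i₁ < R := by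
    have := hbound j₁
    have h1 := hcq' j₁
    rw [if_pos rfl] at h1
    simp only [hi₁, hH]
    omega
  have hi₂R : i₂ < R := by
    have := hbound j₂
    have h1 := hca' j₂
    rw [if_pos rfl] at h1
    have h2 := hcq' j₂
    simp only [hi₂def, hH₂]
    split at h2 <;> omega
  have hHj₂ : H j₂ = i₂ + 1 := by rw [hH2j j₂, if_pos rfl]
  have hkalen : (vsum R c q a).length = R := by rw [vsum_eq_map]; simp
  have hlam_eq : vsum R c q a' = (vsum R c q a).set i₂ ((vsum R c q a).getD i₂ 0 + 1) := by
    rw [vsum_eq_map, vsum_eq_map, getD_map_ent hi₂R]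
    exact map_ent_set hj₂c hi₂R hH2j
  have hnu_eq : vsum R c q' a' = (vsum R c q a').set i₁ ((vsum R c q a').getD i₁ 0 + 1) := by
    rw [vsum_eq_map, vsum_eq_map, getD_map_ent hi₁R]
    refine map_ent_set hj₁c hi₁R ?_
    intro j
    simp only [hH, hcq' j]
    split <;> omega
  have hlamsorted : (vsum R c q a').Pairwise (· ≥ ·) := by
    rw [vsum_eq_map]; exact sorted_map_ent R c _
  have kagd : ∀ (i : ℕ), i < R → (vsum R c q a).getD i 0 = ent c H₂ i := by
    intro i hi
    rw [vsum_eq_map, getD_map_ent hi]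
  by_cases hjj : j₁ = j₂
  · -- same column: swap case, target = Λ
    have htarget : vsum R c q' a = vsum R c q a' := by
      rw [vsum_eq_map, vsum_eq_map]
      apply List.map_congr_left
      intro i _
      apply ent_congr
      intro j hjc
      rw [hcq' j, hca' j, hjj]
      split <;> omega
    have hi12 : i₁ = i₂ + 1 := by rw [hi₁, hjj, hHj₂]
    have hlevel : ∀ j, j < c → H₂ j ≠ i₂ + 1 := by
      intro j hjc
      rcases eq_or_ne j j₂ with rfl | hne
      · omega
      rcases lt_or_gt_of_ne hne with hlt | hgt
      · -- j < j₂ : H₂ j = H j ≥ H j₂ + 1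
        have e1 : H₂ j = H j := by rw [hH2j j, if_neg hne]
        have e2 : colHeight q' j ≥ colHeight q' j₂ := colHeight_anti q' (le_of_lt hlt)
        have e3 : colHeight q' j = colHeight q j := by
          rw [hcq' j, if_neg (by omega : j ≠ j₁)]
        have e4 : colHeight q' j₂ = colHeight q j₂ + 1 := by
          rw [hcq' j₂, if_pos hjj.symm]
        have e5 : colHeight a' j ≥ colHeight a' j₂ := colHeight_anti a' (le_of_lt hlt)
        have e6 : colHeight a' j₂ = colHeight a j₂ + 1 := by rw [hca' j₂, if_pos rfl]
        simp only [hH, hH₂] at *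
        omega
      · -- j > j₂ : H₂ j ≤ H₂ j₂ = i₂
        have e1 : colHeight q j ≤ colHeight q j₂ := colHeight_anti q (le_of_lt hgt)
        have e2 : colHeight a j ≤ colHeight a j₂ := colHeight_anti a (le_of_lt hgt)
        have e3 : H₂ j = colHeight q j + colHeight a j := rfl
        rw [e3]
        omega
    have hentlevel : ent c H₂ (i₂ + 1) = ent c H₂ i₂ := ent_level hlevel
    have hr : ruleSeq (vsum R c q a') (vsum R c q' a') (vsum R c q a)
        = (vsum R c q a).set i₁ ((vsum R c q a).getD i₁ 0 + 1) :=
      ruleSeq_eq_of_ne (by omega) (by omega) (by omega) hlam_eq hnu_eq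
    have hval : (vsum R c q a).getD i₁ 0 = (vsum R c q a).getD i₂ 0 := by
      rw [kagd i₁ hi₁R, kagd i₂ hi₂R, hi12, hentlevel]
    have hgeteq : (vsum R c q a)[i₂]'(by omega) = (vsum R c q a)[i₁]'(by omega) := by
      rw [← List.getD_eq_getElem _ 0, ← List.getD_eq_getElem _ 0, hval]
    have hperm : List.Perm ((vsum R c q a).set i₁ ((vsum R c q a).getD i₁ 0 + 1))
        (vsum R c q a') := by
      rw [hlam_eq, hval]
      exact (set_swap_perm' (by omega) hi12 hgeteq _).symm
    rw [localRule, hr, htarget]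
    exact sortDesc_eq_of_perm hperm hlamsorted
  · -- different columns
    have hane : colHeight a' j₁ = colHeight a j₁ := by rw [hca' j₁, if_neg hjj]
    have hH₂j₁ : H₂ j₁ = i₁ := by
      simp only [hi₁, hH, hH₂, hane]
    have hne12 : i₁ ≠ i₂
    · rcases lt_or_gt_of_ne hjj with hlt | hgt
      · have e1 : H j₁ ≥ H j₂ :=
          Nat.add_le_add (colHeight_anti q (le_of_lt hlt)) (colHeight_anti a' (le_of_lt hlt))
        omega
      · have e2 : colHeight q' j₂ ≥ colHeight q' j₁ := colHeight_anti q' (le_of_lt hgt)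
        have e3 : colHeight q' j₂ = colHeight q j₂ := by
          rw [hcq' j₂, if_neg (by omega : j₂ ≠ j₁)]
        have e4 : colHeight q' j₁ = colHeight q j₁ + 1 := by rw [hcq' j₁, if_pos rfl]
        have e5 : colHeight a j₂ ≥ colHeight a j₁ := colHeight_anti a (le_of_lt hgt)
        simp only [hi₁, hi₂def, hH, hH₂, hane] at *
        omega
    have htarget : vsum R c q' a = (vsum R c q a).set i₁ ((vsum R c q a).getD i₁ 0 + 1) := by
      rw [vsum_eq_map, vsum_eq_map, getD_map_ent hi₁R]
      have hstep : ∀ j, colHeight q' j + colHeight a j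
          = if j = j₁ then H₂ j + 1 else H₂ j := by
        intro j
        simp only [hH₂, hcq' j]
        split <;> omega
      have key := map_ent_set (R := R) hj₁c (by rw [hH₂j₁]; exact hi₁R) hstep
      rw [hH₂j₁] at key
      exact key
    have hr : ruleSeq (vsum R c q a') (vsum R c q' a') (vsum R c q a)
        = (vsum R c q a).set i₁ ((vsum R c q a).getD i₁ 0 + 1) :=
      ruleSeq_eq_of_ne (by omega) (by omega) hne12 hlam_eq hnu_eq
    rw [localRule, hr, htarget]
    apply sortDesc_of_sorted
    rw [← htarget, vsum_eq_map]
    exact sorted_map_ent R c _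

-- AUX6

lemma mono_of_step {f : ℕ → ℕ} {n : ℕ} (h : ∀ i, i + 1 < n → f i < f (i + 1)) :
    ∀ i i', i ≤ i' → i' < n → f i ≤ f i' := by
  intro i i' hii hn
  induction i' with
  | zero => rw [Nat.le_zero.mp hii]
  | succ k ih =>
    rcases Nat.eq_or_lt_of_le hii with rfl | hlt
    · exact le_refl _
    · exact le_trans (ih (by omega) (by omega)) (le_of_lt (h k hn))

/-- The length-`2r` chain of `Q`: row lengths of the shape of entries `≤ x`. -/
def qfun (r c : ℕ) (Q : ℕ → ℕ → ℕ) (x : ℕ) : List ℕ :=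
  (List.range (2 * r)).map fun i =>
    if i < r then ((Finset.range c).filter fun j => Q i j ≤ x).card else 0

lemma qfun_length (r c : ℕ) (Q : ℕ → ℕ → ℕ) (x : ℕ) : (qfun r c Q x).length = 2 * r := by
  simp [qfun]

lemma qfun_getD {r c : ℕ} {Q : ℕ → ℕ → ℕ} {x i : ℕ} (h : i < 2 * r) :
    (qfun r c Q x).getD i 0
      = if i < r then ((Finset.range c).filter fun j => Q i j ≤ x).card else 0 := by
  rw [List.getD_eq_getElem _ _ (by simp [qfun]; omega)]
  simp [qfun]

lemma qfun_fits (r c : ℕ) (Q : ℕ → ℕ → ℕ) (x : ℕ) :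
    ∀ i, r ≤ i → (qfun r c Q x).getD i 0 = 0 := by
  intro i hi
  rcases lt_or_ge i (2 * r) with h | h
  · rw [qfun_getD h, if_neg (by omega)]
  · exact List.getD_eq_default _ _ (by simp [qfun]; omega)

lemma IsSYT.entry_bounds {r c : ℕ} {Q : ℕ → ℕ → ℕ} (hQ : IsSYT r c Q)
    {i j : ℕ} (hi : i < r) (hj : j < c) : 1 ≤ Q i j ∧ Q i j ≤ r * c := by
  have := hQ.2.2.1 (show (⟨i, j⟩ : ℕ × ℕ) ∈ {p : ℕ × ℕ | p.1 < r ∧ p.2 < c} from ⟨hi, hj⟩)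
  simpa [Set.mem_Icc] using this

lemma IsSYT.col_mono {r c : ℕ} {Q : ℕ → ℕ → ℕ} (hQ : IsSYT r c Q)
    {i i' j : ℕ} (hii : i ≤ i') (hi' : i' < r) (hj : j < c) : Q i j ≤ Q i' j :=
  mono_of_step (f := fun i => Q i j) (n := r) (fun i hi => hQ.2.1 i j hi hj) i i' hii hi'

lemma qfun_part {r c : ℕ} {Q : ℕ → ℕ → ℕ} (hQ : IsSYT r c Q) (x : ℕ) :
    Part (2 * r) c (qfun r c Q x) := by
  refine ⟨qfun_length r c Q x, ?_, ?_⟩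
  · rw [List.pairwise_iff_getElem]
    intro i j hi hj hij
    simp only [qfun, List.getElem_map, List.getElem_range]
    have hi2 : i < 2 * r := by simpa [qfun] using hi
    have hj2 : j < 2 * r := by simpa [qfun] using hj
    by_cases hjr : j < r
    · rw [if_pos hjr, if_pos (by omega)]
      apply Finset.card_le_card
      intro t ht
      simp only [Finset.mem_filter, Finset.mem_range] at ht ⊢
      exact ⟨ht.1, le_trans (hQ.col_mono (le_of_lt hij) hjr ht.1) ht.2⟩
    · rw [if_neg hjr]
      exact Nat.zero_le _
  · intro a ha
    obtain ⟨i, hi, rfl⟩ := List.mem_iff_getElem.mp ha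
    simp only [qfun, List.getElem_map, List.getElem_range]
    split
    · calc _ ≤ (Finset.range c).card := Finset.card_filter_le _ _
      _ = c := Finset.card_range c
    · exact Nat.zero_le c

lemma qfun_zero_colH {r c : ℕ} {Q : ℕ → ℕ → ℕ} (hQ : IsSYT r c Q) (j : ℕ) :
    colHeight (qfun r c Q 0) j = 0 := by
  rw [colHeight_eq_countP, List.countP_eq_zero]
  intro a ha
  obtain ⟨i, hi, rfl⟩ := List.mem_iff_getElem.mp ha
  simp only [qfun, List.getElem_map, List.getElem_range]
  have : (if i < r then ((Finset.range c).filter fun j => Q i j ≤ 0).card else 0) = 0 := by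
    split
    · rw [Finset.card_eq_zero, Finset.filter_eq_empty_iff]
      intro t ht
      have := (hQ.entry_bounds (by assumption) (Finset.mem_range.mp ht)).1
      omega
    · rfl
  rw [this]
  simp

lemma qfun_onebox {r c : ℕ} {Q : ℕ → ℕ → ℕ} (hQ : IsSYT r c Q) {x : ℕ} (hx : x < r * c) :
    OneBox (qfun r c Q x) (qfun r c Q (x + 1)) := by
  obtain ⟨p, hp, hpv⟩ := hQ.2.2.2.2 (show x + 1 ∈ Set.Icc 1 (r * c) by simp; omega)
  obtain ⟨hp1, hp2⟩ := hp
  simp only at hpv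
  have huniq : ∀ i j, i < r → j < c → Q i j = x + 1 → i = p.1 ∧ j = p.2 := by
    intro i j hi hj hv
    have := hQ.2.2.2.1 (show (⟨i,j⟩ : ℕ × ℕ) ∈ _ from ⟨hi, hj⟩) ⟨hp1, hp2⟩ (by simp [hv, hpv])
    exact ⟨congrArg Prod.fst this, congrArg Prod.snd this⟩
  refine ⟨p.1, by rw [qfun_length]; omega, ?_⟩
  apply List.ext_getElem (by simp [qfun])
  intro i h1 h2
  have hi2 : i < 2 * r := by simpa [qfun] using h1
  rw [List.getElem_set]
  simp only [qfun_getD (show p.1 < 2 * r by omega)]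
  simp only [qfun, List.getElem_map, List.getElem_range]
  rcases eq_or_ne p.1 i with rfl | hne
  · rw [if_pos rfl, if_pos hp1, if_pos hp1]
    have hins : ((Finset.range c).filter fun j => Q p.1 j ≤ x + 1)
        = insert p.2 ((Finset.range c).filter fun j => Q p.1 j ≤ x) := by
      ext j
      simp only [Finset.mem_filter, Finset.mem_insert, Finset.mem_range]
      rcases eq_or_ne j p.2 with rfl | hj
      · simp [hp2, hpv]
      · constructor
        · rintro ⟨hjc, hle⟩
          refine Or.inr ⟨hjc, ?_⟩
          rcases Nat.eq_or_lt_of_le hle with he | hl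
          · exact absurd ((huniq _ _ hp1 hjc he).2) hj
          · omega
        · rintro (rfl | ⟨hjc, hle⟩)
          · exact absurd rfl hj
          · exact ⟨hjc, by omega⟩
    rw [hins, Finset.card_insert_of_notMem (by simp [hpv])]
  · rw [if_neg hne]
    split
    · congr 1
      apply Finset.filter_congr
      intro j hj
      have : Q i j ≠ x + 1 := by
        intro hv
        exact hne ((huniq i j (by assumption) (Finset.mem_range.mp hj) hv).1.symm)
      constructor <;> intro <;> omega
    · rfl

-- AUX7

lemma chain_part {R C : ℕ} {T : ℕ → ℕ → ℕ} (x : ℕ)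
    (hmono : ∀ i i' j, i ≤ i' → i' < R → j < C → T i j ≤ T i' j) :
    Part R C ((List.range R).map fun i => ((Finset.range C).filter fun j => T i j ≤ x).card) := by
  refine ⟨by simp, ?_, ?_⟩
  · rw [List.pairwise_iff_getElem]
    intro i j hi hj hij
    simp only [List.getElem_map, List.getElem_range]
    apply Finset.card_le_card
    intro t ht
    simp only [Finset.mem_filter, Finset.mem_range] at ht ⊢
    have hjR : j < R := by simpa using hj
    exact ⟨ht.1, le_trans (hmono i j t (le_of_lt hij) hjR ht.1) ht.2⟩
  · intro a ha
    obtain ⟨i, hi, rfl⟩ := List.mem_iff_getElem.mp ha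
    simp only [List.getElem_map, List.getElem_range]
    calc _ ≤ (Finset.range C).card := Finset.card_filter_le _ _
    _ = C := Finset.card_range C

lemma chain_onebox {R C : ℕ} {T : ℕ → ℕ → ℕ} {x : ℕ}
    (hex : ∃ i₀ j₀, i₀ < R ∧ j₀ < C ∧ T i₀ j₀ = x + 1 ∧
      ∀ i j, i < R → j < C → T i j = x + 1 → i = i₀ ∧ j = j₀) :
    OneBox ((List.range R).map fun i => ((Finset.range C).filter fun j => T i j ≤ x).card)
      ((List.range R).map fun i => ((Finset.range C).filter fun j => T i j ≤ x + 1).card) := by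
  obtain ⟨i₀, j₀, hi₀, hj₀, hv, huniq⟩ := hex
  refine ⟨i₀, by simpa using hi₀, ?_⟩
  apply List.ext_getElem (by simp)
  intro i h1 h2
  have hi2 : i < R := by simpa using h1
  rw [List.getElem_set]
  have hgd : ((List.range R).map fun i =>
      ((Finset.range C).filter fun j => T i j ≤ x).card).getD i₀ 0
      = ((Finset.range C).filter fun j => T i₀ j ≤ x).card := by
    rw [List.getD_eq_getElem _ _ (by simpa using hi₀)]
    simp
  simp only [hgd, List.getElem_map, List.getElem_range]
  rcases eq_or_ne i₀ i with rfl | hne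
  · rw [if_pos rfl]
    have hins : ((Finset.range C).filter fun j => T i₀ j ≤ x + 1)
        = insert j₀ ((Finset.range C).filter fun j => T i₀ j ≤ x) := by
      ext j
      simp only [Finset.mem_filter, Finset.mem_insert, Finset.mem_range]
      rcases eq_or_ne j j₀ with rfl | hj
      · simp [hj₀, hv]
      · constructor
        · rintro ⟨hjc, hle⟩
          refine Or.inr ⟨hjc, ?_⟩
          rcases Nat.eq_or_lt_of_le hle with he | hl
          · exact absurd ((huniq _ _ hi₀ hjc he).2) hj
          · omega
        · rintro (rfl | ⟨hjc, hle⟩)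
          · exact absurd rfl hj
          · exact ⟨hjc, by omega⟩
    rw [hins, Finset.card_insert_of_notMem (by simp [hv])]
  · rw [if_neg hne]
    congr 1
    apply Finset.filter_congr
    intro j hj
    have : T i j ≠ x + 1 := by
      intro hvv
      exact hne ((huniq i j hi2 (Finset.mem_range.mp hj) hvv).1.symm)
    constructor <;> intro <;> omega

lemma stack_bounds {r c : ℕ} {P Q : ℕ → ℕ → ℕ} (hP : IsSYT r c P) (hQ : IsSYT r c Q)
    {i j : ℕ} (hi : i < 2 * r) (hj : j < c) :
    1 ≤ stack r c P Q i j ∧ stack r c P Q i j ≤ 2 * r * c := by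
  have hrc2 : r * c + r * c = 2 * r * c := by ring
  unfold stack
  split
  · have := hP.entry_bounds (by assumption) hj
    omega
  · have := hQ.entry_bounds (show i - r < r by omega) hj
    omega

lemma stack_col_mono {r c : ℕ} {P Q : ℕ → ℕ → ℕ} (hP : IsSYT r c P) (hQ : IsSYT r c Q)
    {i i' j : ℕ} (hii : i ≤ i') (hi' : i' < 2 * r) (hj : j < c) :
    stack r c P Q i j ≤ stack r c P Q i' j := by
  refine mono_of_step (f := fun i => stack r c P Q i j) (n := 2 * r) ?_ i i' hii hi'
  intro i hi
  simp only [stack]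
  rcases lt_trichotomy (i + 1) r with h | h | h
  · rw [if_pos (by omega), if_pos h]
    exact hP.2.1 i j h hj
  · rw [if_pos (by omega : i < r), if_neg (by omega)]
    have h1 := (hP.entry_bounds (by omega : i < r) hj).2
    have h2 := (hQ.entry_bounds (show i + 1 - r < r by omega) hj).1
    omega
  · rw [if_neg (by omega), if_neg (by omega)]
    have hs := hQ.2.1 (i - r) j (by omega) hj
    have e : i + 1 - r = (i - r) + 1 := by omega
    rw [e]
    omega

lemma stack_unique {r c : ℕ} {P Q : ℕ → ℕ → ℕ} (hP : IsSYT r c P) (hQ : IsSYT r c Q)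
    {v : ℕ} (h1 : 1 ≤ v) (h2 : v ≤ 2 * r * c) :
    ∃ i₀ j₀, i₀ < 2 * r ∧ j₀ < c ∧ stack r c P Q i₀ j₀ = v ∧
      ∀ i j, i < 2 * r → j < c → stack r c P Q i j = v → i = i₀ ∧ j = j₀ := by
  have hrc2 : r * c + r * c = 2 * r * c := by ring
  rcases le_or_gt v (r * c) with hv | hv
  · obtain ⟨p, hp, hpv⟩ := hP.2.2.2.2 (show v ∈ Set.Icc 1 (r * c) by
      simp only [Set.mem_Icc]; omega)
    obtain ⟨hp1, hp2⟩ := hp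
    simp only at hpv
    refine ⟨p.1, p.2, by omega, hp2, ?_, ?_⟩
    · unfold stack; rw [if_pos hp1]; exact hpv
    · intro i j hi hj hval
      unfold stack at hval
      split at hval
      · have := hP.2.2.2.1 (show (⟨i, j⟩ : ℕ × ℕ) ∈ _ from ⟨by assumption, hj⟩)
          ⟨hp1, hp2⟩ (by simp [hval, hpv])
        exact ⟨congrArg Prod.fst this, congrArg Prod.snd this⟩
      · have := (hQ.entry_bounds (show i - r < r by omega) hj).1
        omega
  · obtain ⟨p, hp, hpv⟩ := hQ.2.2.2.2 (show v - r * c ∈ Set.Icc 1 (r * c) by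
      simp only [Set.mem_Icc]; omega)
    obtain ⟨hp1, hp2⟩ := hp
    simp only at hpv
    refine ⟨p.1 + r, p.2, by omega, hp2, ?_, ?_⟩
    · unfold stack; rw [if_neg (by omega)]
      have e : p.1 + r - r = p.1 := by omega
      rw [e, hpv]
      omega
    · intro i j hi hj hval
      unfold stack at hval
      split at hval
      · have := (hP.entry_bounds (by assumption) hj).2
        omega
      · have hQv : Q (i - r) j = v - r * c := by omega
        have := hQ.2.2.2.1 (show (⟨i - r, j⟩ : ℕ × ℕ) ∈ _ from ⟨by omega, hj⟩)
          ⟨hp1, hp2⟩ (by simp [hQv, hpv])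
        have e1 : i - r = p.1 := congrArg Prod.fst this
        have e2 : j = p.2 := congrArg Prod.snd this
        omega

lemma PErow_zero (R C : ℕ) (T : ℕ → ℕ → ℕ) (x : ℕ) :
    PErow R C T 0 x = (List.range R).map fun i =>
      ((Finset.range C).filter fun j => T i j ≤ min x (R * C)).card := rfl

def InvRow (R c N : ℕ) (T : ℕ → ℕ → ℕ) (j : ℕ) : Prop :=
  PErow R c T j j = List.replicate R 0 ∧
  (∀ X, j ≤ X → X ≤ N → Part R c (PErow R c T j X)) ∧
  (∀ X, j ≤ X → X < N → OneBox (PErow R c T j X) (PErow R c T j (X + 1)))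

lemma part_replicate (R c : ℕ) : Part R c (List.replicate R 0) := by
  refine ⟨by simp, ?_, ?_⟩
  · rw [List.pairwise_iff_getElem]
    intro i j hi hj hij
    simp
  · intro a ha
    rw [List.eq_of_mem_replicate ha]
    exact Nat.zero_le c

lemma inv_zero {r c : ℕ} {P Q : ℕ → ℕ → ℕ} (hP : IsSYT r c P) (hQ : IsSYT r c Q) :
    InvRow (2 * r) c (2 * r * c) (stack r c P Q) 0 := by
  refine ⟨?_, ?_, ?_⟩
  · rw [PErow_zero]
    apply List.ext_getElem (by simp)
    intro i h1 h2
    simp only [List.getElem_map, List.getElem_range, List.getElem_replicate]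
    rw [Finset.card_eq_zero, Finset.filter_eq_empty_iff]
    intro j hj
    have hb := (stack_bounds hP hQ (by simpa using h1) (Finset.mem_range.mp hj)).1
    omega
  · intro X _ hX
    rw [PErow_zero]
    exact chain_part _ (fun i i' j hii hi' hj => stack_col_mono hP hQ hii hi' hj)
  · intro X _ hX
    have hmin1 : min X (2 * r * c) = X := by omega
    have hmin2 : min (X + 1) (2 * r * c) = X + 1 := by omega
    rw [PErow_zero, PErow_zero]
    rw [show (2 * r) * c = 2 * r * c from rfl, hmin1, hmin2]
    exact chain_onebox (stack_unique hP hQ (by omega) (by omega))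

lemma inv_step {R c N : ℕ} {T : ℕ → ℕ → ℕ} {j : ℕ} (hIJ : InvRow R c N T j) :
    InvRow R c N T (j + 1) ∧
      ∀ X, j + 1 ≤ X → X ≤ N → OneBox (PErow R c T (j + 1) X) (PErow R c T j X) := by
  obtain ⟨h0, h1, h2⟩ := hIJ
  have hbase : PErow R c T (j + 1) (j + 1) = List.replicate R 0 := by
    show (if j + 1 ≤ j + 1 then List.replicate R 0
      else localRule (PErow R c T j j) (PErow R c T j (j + 1))
        (nextRow R (PErow R c T j) (j + 1) j)) = List.replicate R 0
    rw [if_pos (le_refl _)]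
  have hstep : ∀ X, j + 1 ≤ X →
      PErow R c T (j + 1) (X + 1)
        = localRule (PErow R c T j X) (PErow R c T j (X + 1)) (PErow R c T (j + 1) X) := by
    intro X hX
    show (if X + 1 ≤ j + 1 then List.replicate R 0
      else localRule (PErow R c T j X) (PErow R c T j (X + 1))
        (nextRow R (PErow R c T j) (j + 1) X)) = _
    rw [if_neg (by omega)]
    rfl
  have hA : ∀ X, j + 1 ≤ X → X ≤ N →
      Part R c (PErow R c T (j + 1) X) ∧
        OneBox (PErow R c T (j + 1) X) (PErow R c T j X) := by
    intro X
    induction X with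
    | zero => omega
    | succ X ih =>
      intro hX1 hX2
      rcases Nat.eq_or_lt_of_le hX1 with heq | hlt
      · have hXj : X = j := by omega
        subst hXj
        rw [hbase]
        refine ⟨part_replicate R c, ?_⟩
        have hob := h2 X (le_refl X) (by omega)
        rw [h0] at hob
        exact hob
      · have hXX : j + 1 ≤ X := by omega
        obtain ⟨hp, hob⟩ := ih hXX (by omega)
        rw [hstep X hXX]
        have hcore := core hp (h1 X (by omega) (by omega)) (h1 (X + 1) (by omega) hX2)
          (h2 X (by omega) (by omega)) hob
        exact ⟨hcore.1, hcore.2.2⟩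
  refine ⟨⟨hbase, fun X hX1 hX2 => (hA X hX1 hX2).1, ?_⟩, fun X hX1 hX2 => (hA X hX1 hX2).2⟩
  intro X hX1 hX2
  rw [hstep X hX1]
  exact (core (hA X hX1 (by omega)).1 (h1 X (by omega) (by omega))
    (h1 (X + 1) (by omega) (by omega)) (h2 X (by omega) hX2) (hA X hX1 (by omega)).2).2.1

lemma invAll {R c N : ℕ} {T : ℕ → ℕ → ℕ} (h0 : InvRow R c N T 0) :
    ∀ j, InvRow R c N T j := by
  intro j
  induction j with
  | zero => exact h0
  | succ j ih => exact (inv_step ih).1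

lemma vprop {R c N : ℕ} {T : ℕ → ℕ → ℕ} (h0 : InvRow R c N T 0) (j : ℕ) :
    ∀ X, j + 1 ≤ X → X ≤ N → OneBox (PErow R c T (j + 1) X) (PErow R c T j X) :=
  (inv_step (invAll h0 j)).2

-- AUX8

lemma OneBox.getD_le {l m : List ℕ} (h : OneBox l m) (i : ℕ) : l.getD i 0 ≤ m.getD i 0 := by
  obtain ⟨t, ht, rfl⟩ := h
  rcases lt_or_ge i l.length with hi | hi
  · rw [List.getD_eq_getElem _ _ hi, List.getD_eq_getElem _ _ (by simpa using hi),
      List.getElem_set]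
    rcases eq_or_ne t i with rfl | hne
    · rw [if_pos rfl, List.getD_eq_getElem _ _ hi]
      omega
    · rw [if_neg hne]
  · rw [List.getD_eq_default _ _ hi, List.getD_eq_default _ _ (by simpa using hi)]

lemma colHeight_replicate (R j : ℕ) : colHeight (List.replicate R 0) j = 0 := by
  rw [colHeight_eq_countP, List.countP_eq_zero]
  intro a ha
  rw [List.eq_of_mem_replicate ha]
  simp

lemma ent_full {c : ℕ} {H : ℕ → ℕ} {i : ℕ} (h : ∀ j, j < c → i < H j) : ent c H i = c := by
  unfold ent
  rw [List.filter_eq_self.mpr (fun j hj => by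
    simpa using h j (List.mem_range.mp hj))]
  exact List.length_range

lemma ent_shift {c r' i : ℕ} (H : ℕ → ℕ) (h : r' ≤ i) :
    ent c (fun j => H j + r') i = ent c H (i - r') := by
  unfold ent
  congr 1
  apply List.filter_congr
  intro j hj
  simp only [decide_eq_decide]
  omega

/-- `vsum q 0 = q` for a sorted `q` with entries `≤ c` of length `R`. -/
lemma vsum_zero_right {R c : ℕ} {q : List ℕ} (hlen : q.length = R)
    (hs : q.Pairwise (· ≥ ·)) (hc : ∀ a ∈ q, a ≤ c) {z : List ℕ}
    (hz : ∀ j, colHeight z j = 0) : vsum R c q z = q := by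
  rw [vsum_eq_map]
  apply List.ext_getElem (by simpa using hlen.symm)
  intro i h1 h2
  simp only [List.getElem_map, List.getElem_range]
  rw [ent_congr (fun j _ => by rw [hz j, Nat.add_zero]) i, ent_colHeight_of_sorted hs hc i,
    List.getD_eq_getElem _ _ h2]

/-- `vsum 0 a = a` for a sorted `a` with entries `≤ c` of length `R`. -/
lemma vsum_zero_left {R c : ℕ} {a : List ℕ} (hlen : a.length = R)
    (hs : a.Pairwise (· ≥ ·)) (hc : ∀ v ∈ a, v ≤ c) {z : List ℕ}
    (hz : ∀ j, colHeight z j = 0) : vsum R c z a = a := by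
  rw [vsum_eq_map]
  apply List.ext_getElem (by simpa using hlen.symm)
  intro i h1 h2
  simp only [List.getElem_map, List.getElem_range]
  rw [ent_congr (fun j _ => by rw [hz j, Nat.zero_add]) i, ent_colHeight_of_sorted hs hc i,
    List.getD_eq_getElem _ _ h2]

lemma PErow_succ_eq {R c : ℕ} {T : ℕ → ℕ → ℕ} {j X : ℕ} (h : j + 1 ≤ X) :
    PErow R c T (j + 1) (X + 1)
      = localRule (PErow R c T j X) (PErow R c T j (X + 1)) (PErow R c T (j + 1) X) := by
  show (if X + 1 ≤ j + 1 then List.replicate R 0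
    else localRule (PErow R c T j X) (PErow R c T j (X + 1))
      (nextRow R (PErow R c T j) (j + 1) X)) = _
  rw [if_neg (by omega)]
  rfl

/-- Explicit form of the row-0 entry of the diagram of a stack at column `r*c`. -/
lemma an_explicit {r c : ℕ} {P Q : ℕ → ℕ → ℕ} (hP : IsSYT r c P) (hQ : IsSYT r c Q) :
    PErow (2 * r) c (stack r c P Q) 0 (r * c)
      = (List.range (2 * r)).map fun i => if i < r then c else 0 := by
  have hrc2 : r * c + r * c = 2 * r * c := by ring
  have hmin : min (r * c) (2 * r * c) = r * c := by omega
  rw [PErow_zero]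
  rw [show (2 * r) * c = 2 * r * c from rfl, hmin]
  apply List.ext_getElem (by simp)
  intro i h1 h2
  simp only [List.getElem_map, List.getElem_range]
  have hi2 : i < 2 * r := by simpa using h1
  rcases lt_or_ge i r with hir | hir
  · rw [if_pos hir]
    rw [Finset.filter_true_of_mem, Finset.card_range]
    intro j hj
    have hb := (hP.entry_bounds hir (Finset.mem_range.mp hj)).2
    show stack r c P Q i j ≤ r * c
    unfold stack
    rw [if_pos hir]
    omega
  · rw [if_neg (by omega)]
    rw [Finset.card_eq_zero, Finset.filter_eq_empty_iff]
    intro j hj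
    have hb := (hQ.entry_bounds (show i - r < r by omega) (Finset.mem_range.mp hj)).1
    show ¬ stack r c P Q i j ≤ r * c
    unfold stack
    rw [if_neg (by omega)]
    omega

lemma colHeight_an {r c : ℕ} (j : ℕ) (hj : j < c) :
    colHeight ((List.range (2 * r)).map fun i => if i < r then c else 0) j = r := by
  rw [colHeight_eq_countP, List.countP_map]
  rw [show 2 * r = r + r from by omega, List.range_add, List.countP_append, List.countP_map]
  have e1 : List.countP ((fun a => decide (j < a)) ∘ fun i => if i < r then c else 0)
      (List.range r) = r := by
    rw [List.countP_eq_length.mpr, List.length_range]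
    intro i hi
    have := List.mem_range.mp hi
    simp only [Function.comp]
    simp [this, hj]
  have e2 : List.countP (((fun a => decide (j < a)) ∘ fun i => if i < r then c else 0)
      ∘ fun x => r + x) (List.range r) = 0 := by
    rw [List.countP_eq_zero]
    intro i hi
    simp only [Function.comp]
    simp [show ¬ (r + i < r) by omega]
  omega

/-- Top boundary: row 0 at column `r*c + x` is the vertical sum of the chain of `Q`
at `x` and the full `r × c` rectangle. -/
lemma toprow {r c : ℕ} {P Q : ℕ → ℕ → ℕ} (hP : IsSYT r c P) (hQ : IsSYT r c Q)
    {x : ℕ} (hx : x ≤ r * c) :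
    PErow (2 * r) c (stack r c P Q) 0 (r * c + x)
      = vsum (2 * r) c (qfun r c Q x) (PErow (2 * r) c (stack r c P Q) 0 (r * c)) := by
  have hrc2 : r * c + r * c = 2 * r * c := by ring
  have hmin : min (r * c + x) (2 * r * c) = r * c + x := by omega
  rw [an_explicit hP hQ, PErow_zero, vsum_eq_map]
  rw [show (2 * r) * c = 2 * r * c from rfl, hmin]
  apply List.ext_getElem (by simp)
  intro i h1 h2
  simp only [List.getElem_map, List.getElem_range]
  have hi2 : i < 2 * r := by simpa using h1
  have hcongr : ∀ j, j < c →
      colHeight (qfun r c Q x) j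
          + colHeight ((List.range (2 * r)).map fun i => if i < r then c else 0) j
        = colHeight (qfun r c Q x) j + r := by
    intro j hj
    rw [colHeight_an j hj]
  rcases lt_or_ge i r with hir | hir
  · rw [ent_congr hcongr i, ent_full (c := c) (i := i)
      (H := fun j => colHeight (qfun r c Q x) j + r)
      (fun j hj => by show i < colHeight (qfun r c Q x) j + r; omega)]
    rw [Finset.filter_true_of_mem, Finset.card_range]
    intro j hj
    have hb := (hP.entry_bounds hir (Finset.mem_range.mp hj)).2
    show stack r c P Q i j ≤ r * c + x
    unfold stack
    rw [if_pos hir]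
    omega
  · rw [ent_congr hcongr i,
      ent_shift (H := fun j => colHeight (qfun r c Q x) j) hir,
      ent_colHeight_of_sorted (qfun_part hQ x).2.1 (qfun_part hQ x).2.2,
      qfun_getD (show i - r < 2 * r by omega), if_pos (by omega)]
    apply Finset.card_nbij' id id ?_ ?_ <;> try (intro j hj; rfl)
    · intro j hj
      simp only [Finset.mem_coe, Finset.mem_filter, Finset.mem_range, id] at hj ⊢
      refine ⟨hj.1, ?_⟩
      have := hj.2
      unfold stack at this
      rw [if_neg (by omega)] at this
      omega
    · intro j hj
      simp only [Finset.mem_coe, Finset.mem_filter, Finset.mem_range, id] at hj ⊢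
      refine ⟨hj.1, ?_⟩
      show stack r c P Q i j ≤ r * c + x
      unfold stack
      rw [if_neg (by omega)]
      omega

-- AUX9


/-- For `P, Q ∈ SYT(r × c)`, `n = rc`, `S = stack(P, Q)`, and the
`(n+1) × (n+1)` northeast block of partitions `λ(x, y)` of `PEdiagram(S)`: for all
`0 ≤ x, y ≤ n` we have `λ(x, y) = λ(x, 0) +' λ(0, y)`, the vertical sum of partitions. -/
theorem lamBlock_eq_vsum (r c : ℕ) (P Q : ℕ → ℕ → ℕ)
    (hP : IsSYT r c P) (hQ : IsSYT r c Q) :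
    ∀ x ≤ r * c, ∀ y ≤ r * c, ∀ i : ℕ,
      (lamBlock r c (stack r c P Q) x y).getD i 0 =
        (vsum (2 * r) c (lamBlock r c (stack r c P Q) x 0)
          (lamBlock r c (stack r c P Q) 0 y)).getD i 0 := by
  have hrc2 : r * c + r * c = 2 * r * c := by ring
  set S := stack r c P Q with hS
  have h0 : InvRow (2 * r) c (2 * r * c) S 0 := inv_zero hP hQ
  have hinv := invAll h0
  have aPart : ∀ y, y ≤ r * c → Part (2 * r) c (PErow (2 * r) c S (r * c - y) (r * c)) :=
    fun y hy => (hinv (r * c - y)).2.1 (r * c) (by omega) (by omega)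
  have aOne : ∀ y, y < r * c →
      OneBox (PErow (2 * r) c S (r * c - y) (r * c))
        (PErow (2 * r) c S (r * c - (y + 1)) (r * c)) := by
    intro y hy
    have hv := vprop h0 (r * c - (y + 1)) (r * c) (by omega) (by omega)
    have e : r * c - (y + 1) + 1 = r * c - y := by omega
    rw [e] at hv
    exact hv
  have aFitsKey : ∀ d, d ≤ r * c → ∀ i, r ≤ i →
      (PErow (2 * r) c S d (r * c)).getD i 0 = 0 := by
    intro d
    induction d with
    | zero =>
      intro _ i hi
      rw [an_explicit hP hQ]
      rcases lt_or_ge i (2 * r) with h | h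
      · rw [List.getD_eq_getElem _ _ (by simpa using h)]
        simp only [List.getElem_map, List.getElem_range]
        rw [if_neg (by omega)]
      · exact List.getD_eq_default _ _ (by simpa using h)
    | succ d ih =>
      intro hd i hi
      have hv := vprop h0 d (r * c) (by omega) (by omega)
      have hle := hv.getD_le i
      have := ih (by omega) i hi
      omega
  have aFits : ∀ y, y ≤ r * c → ∀ i, r ≤ i →
      (PErow (2 * r) c S (r * c - y) (r * c)).getD i 0 = 0 :=
    fun y _ => aFitsKey (r * c - y) (by omega)
  have MAIN : ∀ x, x ≤ r * c → ∀ y, y ≤ r * c →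
      PErow (2 * r) c S (r * c - y) (r * c + x)
        = vsum (2 * r) c (qfun r c Q x) (PErow (2 * r) c S (r * c - y) (r * c)) := by
    intro x
    induction x with
    | zero =>
      intro _ y hy
      rw [Nat.add_zero]
      exact (vsum_zero_left (aPart y hy).1 (aPart y hy).2.1 (aPart y hy).2.2
        (qfun_zero_colH hQ)).symm
    | succ x ihx =>
      intro hx
      have inner : ∀ d y, y + d = r * c →
          PErow (2 * r) c S (r * c - y) (r * c + (x + 1))
            = vsum (2 * r) c (qfun r c Q (x + 1))
                (PErow (2 * r) c S (r * c - y) (r * c)) := by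
        intro d
        induction d with
        | zero =>
          intro y hy
          have hyn : y = r * c := by omega
          subst hyn
          rw [Nat.sub_self]
          exact toprow hP hQ hx
        | succ d ihd =>
          intro y hy
          have hylt : y < r * c := by omega
          have e1 : r * c - y = (r * c - (y + 1)) + 1 := by omega
          rw [e1, show r * c + (x + 1) = (r * c + x) + 1 from rfl,
            PErow_succ_eq (by omega), ← e1]
          rw [show (r * c + x) + 1 = r * c + (x + 1) from rfl]
          have hA := ihx (by omega) (y + 1) (by omega)
          have hB := ihd (y + 1) (by omega)
          have hC := ihx (by omega) y (by omega)
          rw [hA, hB, hC]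
          exact vsum_localRule (qfun_onebox hQ (by omega)) (aOne y hylt)
            (qfun_part hQ (x + 1)).2.2 (aPart (y + 1) (by omega)).2.2
            (fun j => by
              have h1 := colHeight_le_of_fits (qfun_fits r c Q (x + 1)) j
              have h2 := colHeight_le_of_fits (aFits (y + 1) (by omega)) j
              omega)
      exact fun y hy => inner (r * c - y) y (by omega)
  intro x hx y hy i
  have h0y : lamBlock r c S 0 y = PErow (2 * r) c S (r * c - y) (r * c) := by
    show PErow (2 * r) c S (r * c - y) (r * c + 0) = _
    rw [Nat.add_zero]
  have hblock0 : lamBlock r c S x 0 = qfun r c Q x := by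
    have e : lamBlock r c S x 0 = PErow (2 * r) c S (r * c - 0) (r * c + x) := rfl
    have m0 := MAIN x hx 0 (by omega)
    rw [e, m0, Nat.sub_zero, (hinv (r * c)).1]
    exact vsum_zero_right (qfun_part hQ x).1 (qfun_part hQ x).2.1 (qfun_part hQ x).2.2
      (fun j => colHeight_replicate _ j)
  show (PErow (2 * r) c S (r * c - y) (r * c + x)).getD i 0
    = (vsum (2 * r) c (lamBlock r c S x 0) (lamBlock r c S 0 y)).getD i 0
  rw [hblock0, h0y, MAIN x hx y hy]


end PromRS
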